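/- Let I be a finite subset of ℤ^d, h ∈ (0,∞)^d, and |Q| = h₁⋯h_d. For P ∈ ℝ^I define ‖P‖ = inf over all F : ℤ^d × {1,…,d} → ℝ with finitely many nonzero entries satisfying P_i = Σ_{k=1}^d (F_{i,k} − F_{i−e_k,k})/h_k for all i ∈ I, of the quantity |Q|·Σ_{k=1}^d Σ_{i ∈ ℤ^d} |F_{i,k}|. Then ‖·‖ is a well-defined norm on ℝ^I; in particular the infimum is over a nonempty set, and ‖P‖ = 0 implies P = 0. -/

import Mathlib

open Set

private lemma myFinsumMono {α : Type*} {f g : α → ℝ}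
    (hf : (Function.support f).Finite) (hg : (Function.support g).Finite)
    (hfg : ∀ x, f x ≤ g x) : ∑ᶠ x, f x ≤ ∑ᶠ x, g x := by
  classical
  have hs := hf.union hg
  rw [finsum_eq_sum_of_support_subset f (s := hs.toFinset)
    (by rw [Set.Finite.coe_toFinset]; exact Set.subset_union_left),
    finsum_eq_sum_of_support_subset g (s := hs.toFinset)
    (by rw [Set.Finite.coe_toFinset]; exact Set.subset_union_right)]
  exact Finset.sum_le_sum fun x _ => hfg x

private lemma exists_flux (d : ℕ) (hd : 0 < d) (I : Finset (Fin d → ℤ)) (h : Fin d → ℝ)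
    (hh : ∀ k, 0 < h k) (e : Fin d → (Fin d → ℤ))
    (he : ∀ k j, e k j = if j = k then 1 else 0)
    (P : (Fin d → ℤ) → ℝ) :
    ∃ F : (Fin d → ℤ) → Fin d → ℝ, (Function.support F).Finite ∧
      ∀ i ∈ I, P i = ∑ k : Fin d, (F i k - F (i - e k) k) / h k := by
  classical
  set k0 : Fin d := ⟨0, hd⟩ with hk0
  obtain ⟨M, hMI⟩ : ∃ M : ℤ, ∀ j ∈ I, j k0 < M := by
    refine ⟨((I.sup fun j => (j k0).toNat : ℕ) : ℤ) + 1, fun j hj => ?_⟩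
    have h1 : j k0 ≤ ((j k0).toNat : ℤ) := Int.self_le_toNat _
    have h2 : (j k0).toNat ≤ I.sup fun j => (j k0).toNat := Finset.le_sup (f := fun j => (j k0).toNat) hj
    have h3 : (((j k0).toNat : ℕ) : ℤ) ≤ ((I.sup fun j => (j k0).toNat : ℕ) : ℤ) := Int.ofNat_le.2 h2
    exact lt_of_le_of_lt (h1.trans h3) (lt_add_one _)
  obtain ⟨m, hmI⟩ : ∃ m : ℤ, ∀ j ∈ I, m ≤ j k0 := by
    refine ⟨-((I.sup fun j => (-(j k0)).toNat : ℕ) : ℤ), fun j hj => ?_⟩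
    have h1 : -(j k0) ≤ (((-(j k0)).toNat : ℕ) : ℤ) := Int.self_le_toNat _
    have h2 : (-(j k0)).toNat ≤ I.sup fun j => (-(j k0)).toNat := Finset.le_sup (f := fun j => (-(j k0)).toNat) hj
    have h3 : (((-(j k0)).toNat : ℕ) : ℤ) ≤ ((I.sup fun j => (-(j k0)).toNat : ℕ) : ℤ) := Int.ofNat_le.2 h2
    linarith [h1.trans h3]
  refine ⟨fun i k => if k = k0 ∧ i k0 < M then
      h k0 * ∑ j ∈ I.filter (fun j => (∀ l, l ≠ k0 → j l = i l) ∧ j k0 ≤ i k0), P j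
    else 0, ?_, ?_⟩
  · apply Set.Finite.subset
      ((I ×ˢ Finset.Icc m (M - 1)).image fun p => Function.update p.1 k0 p.2).finite_toSet
    intro i hi
    obtain ⟨k, hk⟩ := Function.ne_iff.1 hi
    beta_reduce at hk
    simp only [Pi.zero_apply] at hk
    rw [ne_eq, ite_eq_right_iff, not_forall] at hk
    obtain ⟨⟨hkk0, hiM⟩, hne⟩ := hk
    have hsum : ∑ j ∈ I.filter (fun j => (∀ l, l ≠ k0 → j l = i l) ∧ j k0 ≤ i k0), P j ≠ 0 := by
      intro h0; exact hne (by rw [h0, mul_zero])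
    obtain ⟨j, hjmem, -⟩ := Finset.exists_ne_zero_of_sum_ne_zero hsum
    rw [Finset.mem_filter] at hjmem
    obtain ⟨hjI, hjl, hjk0⟩ := hjmem
    simp only [Finset.coe_image, Set.mem_image, Finset.mem_coe, Finset.mem_product]
    refine ⟨(j, i k0), ⟨hjI, Finset.mem_Icc.2 ⟨le_trans (hmI j hjI) hjk0, by omega⟩⟩, ?_⟩
    funext l
    by_cases hl : l = k0
    · subst hl; simp [Function.update_self]
    · rw [Function.update_of_ne hl]
      exact hjl l hl
  · intro i hi
    beta_reduce
    rw [Finset.sum_eq_single_of_mem k0 (Finset.mem_univ k0)]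
    · have hiM : i k0 < M := hMI i hi
      have hie : (i - e k0) k0 = i k0 - 1 := by
        simp [Pi.sub_apply, he k0 k0]
      have hie2 : ∀ l, l ≠ k0 → (i - e k0) l = i l := by
        intro l hl; simp [Pi.sub_apply, he k0 l, hl]
      rw [if_pos ⟨rfl, hiM⟩, if_pos ⟨rfl, by omega⟩]
      have hBeq : I.filter (fun j => (∀ l, l ≠ k0 → j l = (i - e k0) l) ∧ j k0 ≤ (i - e k0) k0)
          = I.filter (fun j => (∀ l, l ≠ k0 → j l = i l) ∧ j k0 ≤ i k0 - 1) := by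
        apply Finset.filter_congr
        intro j _
        constructor
        · rintro ⟨h1, h2⟩
          exact ⟨fun l hl => (h1 l hl).trans (hie2 l hl), by omega⟩
        · rintro ⟨h1, h2⟩
          exact ⟨fun l hl => (h1 l hl).trans (hie2 l hl).symm, by omega⟩
      rw [hBeq]
      have hAeq : I.filter (fun j => (∀ l, l ≠ k0 → j l = i l) ∧ j k0 ≤ i k0)
          = insert i (I.filter (fun j => (∀ l, l ≠ k0 → j l = i l) ∧ j k0 ≤ i k0 - 1)) := by
        ext j
        simp only [Finset.mem_filter, Finset.mem_insert]
        constructor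
        · rintro ⟨hjI, hjl, hjk⟩
          rcases eq_or_lt_of_le hjk with hEq | hlt
          · left
            funext l
            by_cases hl : l = k0
            · subst hl; exact hEq
            · exact hjl l hl
          · right; exact ⟨hjI, hjl, by omega⟩
        · rintro (rfl | ⟨hjI, hjl, hjk⟩)
          · exact ⟨hi, fun l _ => rfl, le_refl _⟩
          · exact ⟨hjI, hjl, by omega⟩
      rw [hAeq, Finset.sum_insert (by simp only [Finset.mem_filter]; rintro ⟨-, -, hle⟩; omega)]
      rw [mul_add, add_sub_cancel_right, mul_comm, mul_div_assoc,
        div_self (ne_of_gt (hh k0)), mul_one]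
    · intro k _ hk
      rw [if_neg (by tauto), if_neg (by tauto), sub_zero, zero_div]

/-- The discrete `W^{-1,1}` norm is well defined: for every `P` the admissible
set of fluxes is nonempty, the resulting infimum is absolutely homogeneous,
satisfies the triangle inequality, and vanishes only at `P = 0`. -/
theorem discrete_Wm11_norm
    (d : ℕ) (hd : 0 < d) (I : Finset (Fin d → ℤ)) (h : Fin d → ℝ)
    (hh : ∀ k, 0 < h k)
    (e : Fin d → (Fin d → ℤ))
    (he : ∀ k j, e k j = if j = k then 1 else 0)
    (A : ((Fin d → ℤ) → ℝ) → Set ℝ)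
    (hA : ∀ P : (Fin d → ℤ) → ℝ,
      A P = { w : ℝ | ∃ F : (Fin d → ℤ) → Fin d → ℝ,
        (Function.support F).Finite ∧
        (∀ i ∈ I, P i = ∑ k : Fin d, (F i k - F (i - e k) k) / h k) ∧
        w = (∏ k : Fin d, h k) * ∑ᶠ i : (Fin d → ℤ), ∑ k : Fin d, |F i k| })
    (N : ((Fin d → ℤ) → ℝ) → ℝ)
    (hN : ∀ P, N P = sInf (A P)) :
    (∀ P : (Fin d → ℤ) → ℝ, (A P).Nonempty) ∧
    (∀ P : (Fin d → ℤ) → ℝ, 0 ≤ N P) ∧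
    (∀ (c : ℝ) (P : (Fin d → ℤ) → ℝ), N (fun i => c * P i) = |c| * N P) ∧
    (∀ P Q : (Fin d → ℤ) → ℝ, N (fun i => P i + Q i) ≤ N P + N Q) ∧
    (∀ P : (Fin d → ℤ) → ℝ, N P = 0 → ∀ i ∈ I, P i = 0) := by
  classical
  have hprod : 0 < ∏ k : Fin d, h k := Finset.prod_pos fun k _ => hh k
  -- support of absolute-value cost function
  have hsupp : ∀ F : (Fin d → ℤ) → Fin d → ℝ,
      Function.support (fun i => ∑ k : Fin d, |F i k|) ⊆ Function.support F := by
    intro F i hi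
    simp only [Function.mem_support] at hi ⊢
    intro hFi
    apply hi
    rw [hFi]
    simp
  -- nonemptiness
  have hAnon : ∀ P : (Fin d → ℤ) → ℝ, (A P).Nonempty := by
    intro P
    obtain ⟨F, hF1, hF2⟩ := exists_flux d hd I h hh e he P
    exact ⟨_, by rw [hA]; exact ⟨F, hF1, hF2, rfl⟩⟩
  -- every element is nonnegative
  have hApos : ∀ P, ∀ w ∈ A P, 0 ≤ w := by
    intro P w hw
    rw [hA] at hw
    obtain ⟨F, -, -, rfl⟩ := hw
    exact mul_nonneg hprod.le
      (finsum_nonneg fun i => Finset.sum_nonneg fun k _ => abs_nonneg _)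
  have hbdd : ∀ P, BddBelow (A P) := fun P => ⟨0, fun w hw => hApos P w hw⟩
  have hNpos : ∀ P, 0 ≤ N P := fun P => (hN P) ▸ Real.sInf_nonneg (hApos P)
  -- scaling membership
  have hscale : ∀ (c : ℝ) (P : (Fin d → ℤ) → ℝ), ∀ w ∈ A P,
      |c| * w ∈ A (fun i => c * P i) := by
    intro c P w hw
    rw [hA] at hw ⊢
    obtain ⟨F, hF1, hF2, rfl⟩ := hw
    refine ⟨fun i k => c * F i k, ?_, ?_, ?_⟩
    · apply hF1.subset
      intro i hi
      simp only [Function.mem_support] at hi ⊢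
      intro hFi
      apply hi
      funext k
      rw [hFi]
      simp
    · intro i hi
      rw [hF2 i hi, Finset.mul_sum]
      congr 1
      funext k
      field_simp
    · rw [← mul_assoc, mul_comm |c| (∏ k : Fin d, h k), mul_assoc]
      congr 1
      rw [mul_finsum _ _]
      congr 1
      funext i
      rw [Finset.mul_sum]
      congr 1
      funext k
      rw [abs_mul]
  -- one-sided homogeneity
  have hNscale_le : ∀ (c : ℝ) (P : (Fin d → ℤ) → ℝ), N (fun i => c * P i) ≤ |c| * N P := by
    intro c P
    rw [hN, hN]
    rw [show |c| * sInf (A P) = sInf ((|c| * ·) '' (A P)) by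
      simp only [← smul_eq_mul, Set.image_smul]
      exact (Real.sInf_smul_of_nonneg (abs_nonneg c) _).symm]
    apply le_csInf ((hAnon P).image _)
    rintro x ⟨w, hw, rfl⟩
    exact csInf_le (hbdd _) (hscale c P w hw)
  constructor
  · exact hAnon
  constructor
  · exact hNpos
  constructor
  · -- homogeneity
    intro c P
    rcases eq_or_ne c 0 with rfl | hc
    · simp only [abs_zero, zero_mul]
      have h1 := hNscale_le 0 P
      simp only [abs_zero, zero_mul] at h1
      exact le_antisymm h1 (hNpos _)
    · refine le_antisymm (hNscale_le c P) ?_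
      have h2 := hNscale_le c⁻¹ (fun i => c * P i)
      have h3 : (fun i => c⁻¹ * (c * P i)) = P := by
        funext i; rw [inv_mul_cancel_left₀ hc]
      rw [h3, abs_inv] at h2
      calc |c| * N P ≤ |c| * (|c|⁻¹ * N fun i => c * P i) := by
            apply mul_le_mul_of_nonneg_left h2 (abs_nonneg c)
        _ = N fun i => c * P i := by
            rw [← mul_assoc, mul_inv_cancel₀ (abs_ne_zero.2 hc), one_mul]
  constructor
  · -- triangle inequality
    intro P Q
    have key : ∀ w1 ∈ A P, ∀ w2 ∈ A Q, N (fun i => P i + Q i) ≤ w1 + w2 := by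
      intro w1 hw1 w2 hw2
      rw [hA] at hw1 hw2
      obtain ⟨F, hF1, hF2, rfl⟩ := hw1
      obtain ⟨G, hG1, hG2, rfl⟩ := hw2
      have hFG : Function.support (fun i => F i + G i) ⊆
          Function.support F ∪ Function.support G := by
        intro i hi
        simp only [Function.mem_support, Set.mem_union] at hi ⊢
        by_contra hcon
        push_neg at hcon
        apply hi
        rw [hcon.1, hcon.2]
        simp
      have hmem : (∏ k : Fin d, h k) * ∑ᶠ i : (Fin d → ℤ), ∑ k : Fin d, |F i k + G i k|
          ∈ A (fun i => P i + Q i) := by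
        rw [hA]
        refine ⟨fun i => F i + G i, (hF1.union hG1).subset hFG, ?_, rfl⟩
        intro i hi
        rw [hF2 i hi, hG2 i hi, ← Finset.sum_add_distrib]
        congr 1
        funext k
        rw [← add_div]
        congr 1
        simp only [Pi.add_apply]
        ring
      have hle : (∏ k : Fin d, h k) * ∑ᶠ i : (Fin d → ℤ), ∑ k : Fin d, |F i k + G i k|
          ≤ (∏ k : Fin d, h k) * ∑ᶠ i : (Fin d → ℤ), ∑ k : Fin d, |F i k|
          + (∏ k : Fin d, h k) * ∑ᶠ i : (Fin d → ℤ), ∑ k : Fin d, |G i k| := by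
        rw [← mul_add]
        apply mul_le_mul_of_nonneg_left _ hprod.le
        rw [← finsum_add_distrib (hF1.subset (hsupp F)) (hG1.subset (hsupp G))]
        apply myFinsumMono
        · exact (hF1.union hG1).subset (le_trans (fun i hi => hsupp _ hi) hFG)
        · apply (hF1.union hG1).subset
          intro i hi
          simp only [Function.mem_support] at hi
          by_contra hcon
          simp only [Set.mem_union, Function.mem_support, not_or, not_not] at hcon
          apply hi
          rw [hcon.1, hcon.2]
          simp
        · intro i
          calc ∑ k : Fin d, |F i k + G i k| ≤ ∑ k : Fin d, (|F i k| + |G i k|) :=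
              Finset.sum_le_sum fun k _ => abs_add_le _ _
            _ = ∑ k : Fin d, |F i k| + ∑ k : Fin d, |G i k| := Finset.sum_add_distrib
      calc N (fun i => P i + Q i) ≤ _ := (hN _) ▸ csInf_le (hbdd _) hmem
        _ ≤ _ := hle
    have h1 : ∀ w1 ∈ A P, N (fun i => P i + Q i) - w1 ≤ N Q := by
      intro w1 hw1
      rw [hN Q]
      apply le_csInf (hAnon Q)
      intro w2 hw2
      linarith [key w1 hw1 w2 hw2]
    have h2 : N (fun i => P i + Q i) - N Q ≤ N P := by
      rw [hN P]
      apply le_csInf (hAnon P)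
      intro w1 hw1
      linarith [h1 w1 hw1]
    linarith
  · -- definiteness
    intro P hP0 i hi
    set C : ℝ := (∑ k : Fin d, 2 / h k) / ∏ k : Fin d, h k with hC
    have hC0 : 0 < C := by
      apply div_pos _ hprod
      apply Finset.sum_pos (fun k _ => div_pos two_pos (hh k)) ⟨⟨0, hd⟩, Finset.mem_univ _⟩
    have hb : ∀ w ∈ A P, |P i| / C ≤ w := by
      intro w hw
      rw [hA] at hw
      obtain ⟨F, hF1, hF2, rfl⟩ := hw
      set S : ℝ := ∑ᶠ j : (Fin d → ℤ), ∑ k : Fin d, |F j k| with hS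
      have hSnn : ∀ j : (Fin d → ℤ), 0 ≤ ∑ k : Fin d, |F j k| :=
        fun j => Finset.sum_nonneg fun k _ => abs_nonneg _
      have hterm : ∀ (j : Fin d → ℤ) (k : Fin d), |F j k| ≤ S := by
        intro j k
        calc |F j k| ≤ ∑ k' : Fin d, |F j k'| :=
            Finset.single_le_sum (f := fun k' => |F j k'|) (fun k' _ => abs_nonneg _) (Finset.mem_univ k)
          _ ≤ S := single_le_finsum j (hF1.subset (hsupp F)) hSnn
      have hS0 : 0 ≤ S := finsum_nonneg hSnn
      have hPb : |P i| ≤ C * ((∏ k : Fin d, h k) * S) := by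
        rw [hF2 i hi]
        calc |∑ k : Fin d, (F i k - F (i - e k) k) / h k|
            ≤ ∑ k : Fin d, |(F i k - F (i - e k) k) / h k| := Finset.abs_sum_le_sum_abs _ _
          _ ≤ ∑ k : Fin d, (2 / h k) * S := by
              apply Finset.sum_le_sum
              intro k _
              rw [abs_div, abs_of_pos (hh k), div_mul_eq_mul_div, div_le_div_iff_of_pos_right (hh k)]
              calc |F i k - F (i - e k) k| ≤ |F i k| + |F (i - e k) k| := abs_sub _ _
                _ ≤ S + S := add_le_add (hterm i k) (hterm _ k)
                _ = 2 * S := by ring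
          _ = (∑ k : Fin d, 2 / h k) * S := by rw [Finset.sum_mul]
          _ = C * ((∏ k : Fin d, h k) * S) := by
              rw [hC]
              field_simp
      rw [div_le_iff₀ hC0]
      calc |P i| ≤ C * ((∏ k : Fin d, h k) * S) := hPb
        _ = (∏ k : Fin d, h k) * S * C := by ring
    have hfin : |P i| / C ≤ 0 := by
      have := le_csInf (hAnon P) hb
      rw [← hN, hP0] at this
      exact this
    have : |P i| ≤ 0 := by
      rw [div_le_iff₀ hC0, zero_mul] at hfin
      exact hfin
    exact abs_nonpos_iff.1 this
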